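/- arXiv:2202.05914 — 6 statements merged into one kernel-verified Lean document; each statement's English description precedes it below -/
import Mathlib

section
/- Let ≤ be a well-order on W and let Π be a ≤-compatible term-rewriting system on V = W →₀ k. Then Π is terminating: there is no infinite sequence f₀ →_Π f₁ →_Π f₂ →_Π ⋯ in V; equivalently, the converse of the one-step rewriting relation →_Π is a well-founded relation on V. -/
/-- One-step rewriting relation of a term-rewriting system `S ⊆ W × (W →₀ k)`:
`f →_S g` iff there is a rule `(t, v) ∈ S` with `t ∈ supp f` and
`g = f - f t • δ_t + f t • v`. -/
def RewStep {k W : Type*} [Field k] (S : Set (W × (W →₀ k))) (f g : W →₀ k) : Prop :=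
  ∃ t v, (t, v) ∈ S ∧ f t ≠ 0 ∧ g = f - Finsupp.single t (f t) + f t • v

/-- A rewriting system is `≤`-compatible if every monomial in the support of a
right-hand side is strictly smaller than the left-hand side. -/
def RewCompatible {k W : Type*} [Field k] [LinearOrder W] (S : Set (W × (W →₀ k))) : Prop :=
  ∀ p ∈ S, ∀ w ∈ (p.2 : W →₀ k).support, w < p.1

/-- A `≤`-compatible rewriting system over a well-ordered set `W` is terminating:
there is no infinite chain of one-step rewritings; equivalently, the converse of
the one-step rewriting relation is well-founded. -/
theorem rewriting_terminating {k W : Type*} [Field k] [LinearOrder W] [WellFoundedLT W]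
    (S : Set (W × (W →₀ k))) (hS : RewCompatible S) :
    (¬ ∃ f : ℕ → (W →₀ k), ∀ n, RewStep S (f n) (f (n + 1))) ∧
      WellFounded (fun g f : W →₀ k => RewStep S f g) := by
  classical
  -- a sub-multiset is reachable by reflexive-transitive CutExpand
  have le_rtg : ∀ s' s : Multiset W, s' ≤ s →
      Relation.ReflTransGen (Relation.CutExpand ((· < ·) : W → W → Prop)) s' s := by
    intro s' s hle
    obtain ⟨d, rfl⟩ := Multiset.le_iff_exists_add.mp hle
    induction d using Multiset.induction_on with
    | empty => simpa using Relation.ReflTransGen.refl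
    | cons a d ih =>
      refine (ih le_self_add).tail ?_
      have : s' + a ::ₘ d = (s' + d) + {a} := by
        rw [Multiset.add_cons, ← Multiset.singleton_add, add_comm ({a} : Multiset W) (s' + d)]
      rw [this]
      exact ⟨0, a, by simp, by simp⟩
  have key : ∀ f g : W →₀ k, RewStep S f g →
      Relation.TransGen (Relation.CutExpand ((· < ·) : W → W → Prop))
        g.support.val f.support.val := by
    rintro f g ⟨t, v, hmem, hft, rfl⟩
    have hvt : ∀ w ∈ v.support, w < t := fun w hw => hS (t, v) hmem w hw
    have hvt0 : v t = 0 := by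
      by_contra h
      exact lt_irrefl t (hvt t (Finsupp.mem_support_iff.mpr h))
    have htf : t ∈ f.support := Finsupp.mem_support_iff.mpr hft
    -- support of the result is contained in (support f).erase t ∪ support v
    have hsub : (f - Finsupp.single t (f t) + f t • v).support ⊆
        f.support.erase t ∪ v.support := by
      intro w hw
      rw [Finsupp.mem_support_iff] at hw
      by_cases hwv : w ∈ v.support
      · exact Finset.mem_union_right _ hwv
      · have hv0 : v w = 0 := Finsupp.notMem_support_iff.mp hwv
        by_cases hwt : w = t
        · subst hwt
          exfalso
          apply hw
          simp [Finsupp.sub_apply, Finsupp.add_apply, hvt0]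
        · apply Finset.mem_union_left
          rw [Finset.mem_erase, Finsupp.mem_support_iff]
          refine ⟨hwt, ?_⟩
          intro h0
          apply hw
          simp [Finsupp.sub_apply, Finsupp.add_apply, hv0,
            Finsupp.single_apply, Ne.symm hwt, h0]
    have hle : (f - Finsupp.single t (f t) + f t • v).support.val ≤
        f.support.val.erase t + v.support.val := by
      calc (f - Finsupp.single t (f t) + f t • v).support.val
          ≤ (f.support.erase t ∪ v.support).val := Finset.val_le_iff.mpr hsub
        _ = (f.support.erase t).val ∪ v.support.val := Finset.union_val _ _
        _ ≤ (f.support.erase t).val + v.support.val := Multiset.union_le_add _ _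
        _ = f.support.val.erase t + v.support.val := by rw [Finset.erase_val]
    have hstep : Relation.CutExpand ((· < ·) : W → W → Prop)
        (f.support.val.erase t + v.support.val) f.support.val := by
      refine ⟨v.support.val, t, fun w hw => hvt w hw, ?_⟩
      rw [add_right_comm, add_comm (f.support.val.erase t) ({t} : Multiset W),
        Multiset.singleton_add, Multiset.cons_erase htf]
    exact Relation.TransGen.tail' (le_rtg _ _ hle) hstep
  have wfM : WellFounded (Relation.TransGen
      (Relation.CutExpand ((· < ·) : W → W → Prop))) :=
    (IsWellFounded.wf (r := ((· < ·) : W → W → Prop))).cutExpand.transGen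
  have wf2 : WellFounded (fun g f : W →₀ k => RewStep S f g) :=
    Subrelation.wf (fun {g f} h => key f g h)
      (InvImage.wf (fun f : W →₀ k => f.support.val) wfM)
  refine ⟨?_, wf2⟩
  rintro ⟨f, hf⟩
  have : ∀ x : W →₀ k, Acc (fun g f : W →₀ k => RewStep S f g) x →
      ∀ n, f n = x → False := by
    intro x hx
    induction hx with
    | intro x _ ih =>
      rintro n rfl
      exact ih _ (hf n) (n + 1) rfl
  exact this (f 0) (wf2.apply (f 0)) 0 rfl
end

section
/- Let ≤ be a well-order on W and let Π be a ≤-compatible term-rewriting system on V = W →₀ k. Then V = k·Irr(Π) + I_Π, i.e., every f ∈ V is the sum of an element of k·Irr(Π) and an element of I_Π. -/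
/-- The linear span `I_S` of the elements `δ_t - v` for the rules `(t, v)` of `S`. -/
noncomputable def RewIdeal {k W : Type*} [Field k] (S : Set (W × (W →₀ k))) : Submodule k (W →₀ k) :=
  Submodule.span k {x : W →₀ k | ∃ p ∈ S, x = Finsupp.single p.1 (1 : k) - p.2}

/-- `Irr(S)`: the set of basis elements that are not the left-hand side of any rule. -/
def RewIrr {k W : Type*} [Field k] (S : Set (W × (W →₀ k))) : Set W :=
  {w | ∀ v, (w, v) ∉ S}

/-- `k·Irr(S)`: the linear span of the irreducible basis elements. -/
noncomputable def RewIrrSpan {k W : Type*} [Field k] (S : Set (W × (W →₀ k))) : Submodule k (W →₀ k) :=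
  Submodule.span k ((fun w => Finsupp.single w (1 : k)) '' RewIrr S)

/-- For a `≤`-compatible rewriting system over a well-ordered set,
`V = k·Irr(S) + I_S`. -/
theorem span_irr_sup_ideal_eq_top {k W : Type*} [Field k] [LinearOrder W] [WellFoundedLT W]
    (S : Set (W × (W →₀ k))) (hS : RewCompatible S) :
    RewIrrSpan S ⊔ RewIdeal S = ⊤ := by
  set M := RewIrrSpan S ⊔ RewIdeal S with hM
  have sum_eq : ∀ f : W →₀ k, f = f.sum fun u a => a • Finsupp.single u (1 : k) := by
    intro f
    conv_lhs => rw [← Finsupp.sum_single f]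
    exact Finsupp.sum_congr fun u _ => by rw [Finsupp.smul_single, smul_eq_mul, mul_one]
  have key : ∀ w : W, Finsupp.single w (1 : k) ∈ M := by
    intro w
    induction w using WellFoundedLT.induction with
    | ind w IH =>
      by_cases hw : w ∈ RewIrr S
      · exact Submodule.mem_sup_left (Submodule.subset_span ⟨w, hw, rfl⟩)
      · simp only [RewIrr, Set.mem_setOf_eq, not_forall, not_not] at hw
        obtain ⟨v, hv⟩ := hw
        have hvM : v ∈ M := by
          rw [sum_eq v]
          exact Submodule.sum_mem _ fun u hu =>
            Submodule.smul_mem _ _ (IH u (hS (w, v) hv u hu))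
        have hdm : Finsupp.single w (1 : k) - v ∈ M :=
          Submodule.mem_sup_right (Submodule.subset_span ⟨(w, v), hv, rfl⟩)
        simpa using M.add_mem hdm hvM
  rw [eq_top_iff]
  intro f _
  rw [sum_eq f]
  exact Submodule.sum_mem _ fun w _ => Submodule.smul_mem _ _ (key w)
end

section
/- Let ≤ be a well-order on W and let Π be a ≤-compatible term-rewriting system on V = W →₀ k. If Π is confluent, then for every f ∈ V one has f ∈ I_Π if and only if f →*_Π 0. -/
/-- Confluence: any two rewritings of a common element are joinable. -/
def RewConfluent {k W : Type*} [Field k] (S : Set (W × (W →₀ k))) : Prop :=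
  ∀ f g₁ g₂ : W →₀ k, Relation.ReflTransGen (RewStep S) f g₁ →
    Relation.ReflTransGen (RewStep S) f g₂ →
      ∃ h, Relation.ReflTransGen (RewStep S) g₁ h ∧ Relation.ReflTransGen (RewStep S) g₂ h

section Aux
variable {k W : Type*} [Field k] {S : Set (W × (W →₀ k))}

lemma rew_rtg_zero {g : W →₀ k}
    (h : Relation.ReflTransGen (RewStep S) 0 g) : g = 0 := by
  induction h with
  | refl => rfl
  | tail _ hstep ih =>
    subst ih
    obtain ⟨t, v, _, ht, _⟩ := hstep
    simp at ht

lemma rew_step_smul {f g : W →₀ k} {c : k} (hc : c ≠ 0) (h : RewStep S f g) :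
    RewStep S (c • f) (c • g) := by
  obtain ⟨t, v, hm, hft, rfl⟩ := h
  refine ⟨t, v, hm, by simpa using mul_ne_zero hc hft, ?_⟩
  simp only [Finsupp.smul_apply, smul_eq_mul, smul_add, smul_sub, Finsupp.smul_single,
    smul_smul]

lemma rew_rtg_smul {f g : W →₀ k} {c : k} (hc : c ≠ 0)
    (h : Relation.ReflTransGen (RewStep S) f g) :
    Relation.ReflTransGen (RewStep S) (c • f) (c • g) := by
  induction h with
  | refl => exact .refl
  | tail _ hstep ih => exact ih.tail (rew_step_smul hc hstep)

variable [LinearOrder W]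

lemma rew_step_add_join (hS : RewCompatible S) {f f' : W →₀ k} (h : RewStep S f f')
    (g : W →₀ k) : ∃ h₀, Relation.ReflTransGen (RewStep S) (f + g) h₀ ∧
      Relation.ReflTransGen (RewStep S) (f' + g) h₀ := by
  obtain ⟨t, v, hm, hft, rfl⟩ := h
  have hvt : v t = 0 := by
    by_contra hne
    exact lt_irrefl t (hS (t, v) hm t (Finsupp.mem_support_iff.2 hne))
  have key : f + g - Finsupp.single t (f t + g t) + (f t + g t) • v
      = (f - Finsupp.single t (f t) + f t • v) + g - Finsupp.single t (g t) + g t • v := by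
    rw [Finsupp.single_add, add_smul]; abel
  have hf't : (f - Finsupp.single t (f t) + f t • v + g) t = g t := by
    simp [hvt]
  by_cases hc : f t + g t = 0
  · refine ⟨f + g, .refl, ?_⟩
    by_cases hgt : g t = 0
    · exact absurd (by simpa [hgt] using hc) hft
    · refine Relation.ReflTransGen.single ⟨t, v, hm, by rwa [hf't], ?_⟩
      rw [hf't, ← key, hc]
      simp
  · refine ⟨f + g - Finsupp.single t (f t + g t) + (f t + g t) • v,
      Relation.ReflTransGen.single ⟨t, v, hm, by simpa using hc, by simp⟩, ?_⟩
    by_cases hgt : g t = 0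
    · rw [key, hgt]
      simp only [Finsupp.single_zero, sub_zero, zero_smul, add_zero]
      exact Relation.ReflTransGen.refl
    · refine Relation.ReflTransGen.single ⟨t, v, hm, by rwa [hf't], ?_⟩
      rw [hf't, key]

lemma rew_rtg_add_join (hS : RewCompatible S) (hconf : RewConfluent S)
    {f f' : W →₀ k} (h : Relation.ReflTransGen (RewStep S) f f') (g : W →₀ k) :
    ∃ h₀, Relation.ReflTransGen (RewStep S) (f + g) h₀ ∧
      Relation.ReflTransGen (RewStep S) (f' + g) h₀ := by
  induction h with
  | refl => exact ⟨f + g, .refl, .refl⟩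
  | @tail m f' _ hstep ih =>
    obtain ⟨h₁, hfg, hmg⟩ := ih
    obtain ⟨h₂, hmg₂, hf'g⟩ := rew_step_add_join hS hstep g
    obtain ⟨h₃, h₁₃, h₂₃⟩ := hconf (m + g) h₁ h₂ hmg hmg₂
    exact ⟨h₃, hfg.trans h₁₃, hf'g.trans h₂₃⟩

end Aux

/-- For a confluent `≤`-compatible rewriting system over a well-ordered set,
`f ∈ I_S` if and only if `f` rewrites to `0`. -/
theorem mem_ideal_iff_rewrites_to_zero {k W : Type*} [Field k] [LinearOrder W]
    [WellFoundedLT W] (S : Set (W × (W →₀ k))) (hS : RewCompatible S)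
    (hc : RewConfluent S) (f : W →₀ k) :
    f ∈ RewIdeal S ↔ Relation.ReflTransGen (RewStep S) f 0 := by
  constructor
  · intro hf
    induction hf using Submodule.span_induction with
    | mem x hx =>
      obtain ⟨⟨t, v⟩, hm, rfl⟩ := hx
      have hvt : v t = 0 := by
        by_contra hne
        exact lt_irrefl t (hS (t, v) hm t (Finsupp.mem_support_iff.2 hne))
      refine Relation.ReflTransGen.single ⟨t, v, hm, ?_, ?_⟩
      · simp [hvt]
      · have h1 : (Finsupp.single t (1:k) - v) t = 1 := by simp [hvt]
        rw [h1]
        simp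
    | zero => exact .refl
    | add x y _ _ hx hy =>
      obtain ⟨h₀, hxy, hy0⟩ := rew_rtg_add_join hS hc hx y
      -- x + y →* h₀ and 0 + y = y →* h₀; also y →* 0, so by confluence h₀ and 0 join;
      have hy' : Relation.ReflTransGen (RewStep S) y h₀ := by simpa using hy0
      obtain ⟨h₁, hh₀, hz⟩ := hc y h₀ 0 hy' hy
      have : h₁ = 0 := rew_rtg_zero hz
      subst this
      exact hxy.trans hh₀
    | smul c x _ hx =>
      by_cases hc0 : c = 0
      · subst hc0; simpa using Relation.ReflTransGen.refl
      · simpa using rew_rtg_smul hc0 hx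
  · intro h
    induction h using Relation.ReflTransGen.head_induction_on with
    | refl => exact (RewIdeal S).zero_mem
    | head hstep _ ih =>
      rename_i a m _
      obtain ⟨t, v, hm, hat, rfl⟩ := hstep
      have hgen : Finsupp.single t (1:k) - v ∈ RewIdeal S :=
        Submodule.subset_span ⟨(t, v), hm, rfl⟩
      have : a = (a - Finsupp.single t (a t) + a t • v) + a t • (Finsupp.single t (1:k) - v) := by
        rw [smul_sub, Finsupp.smul_single, smul_eq_mul, mul_one]; abel
      rw [this]
      exact (RewIdeal S).add_mem ih ((RewIdeal S).smul_mem _ hgen)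
end

section
/- Let ≤ be a well-order on W and let Π be a ≤-compatible term-rewriting system on V = W →₀ k. The following are equivalent: (1) Π is confluent; (2) for every nonzero f ∈ I_Π, the ≤-maximum element of supp(f) is the left-hand side of some rule of Π (i.e., it does not lie in Irr(Π)); (3) V = k·Irr(Π) ⊕ I_Π and the residue classes {δ_w + I_Π : w ∈ Irr(Π)} form a k-basis of the quotient vector space V / I_Π. -/
open Relation Finsupp
set_option linter.unusedSectionVars false
set_option linter.unnecessarySimpa false

section Aux
variable {k W : Type*} [Field k] [LinearOrder W] [WellFoundedLT W]
variable {S : Set (W × (W →₀ k))}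

/-- Detailed form of a rewriting step (using compatibility). -/
lemma rewStep_spec (hS : RewCompatible S) {f g : W →₀ k} (h : RewStep S f g) :
    ∃ t v, (t, v) ∈ S ∧ f t ≠ 0 ∧ g = f - Finsupp.single t (f t) + f t • v ∧
      g t = 0 ∧ ∀ d, t < d → g d = f d := by
  obtain ⟨t, v, hmem, hft, hg⟩ := h
  have hv : ∀ d, t ≤ d → v d = 0 := by
    intro d hd
    by_contra hne
    exact absurd (hS _ hmem d (Finsupp.mem_support_iff.mpr hne)) (not_lt.mpr hd)
  refine ⟨t, v, hmem, hft, hg, ?_, ?_⟩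
  · simp [hg, hv t le_rfl]
  · intro d hd
    simp [hg, Finsupp.single_apply, (ne_of_gt hd).symm, hv d hd.le]

lemma rewStep_sub_mem {f g : W →₀ k} (h : RewStep S f g) : f - g ∈ RewIdeal S := by
  obtain ⟨t, v, hmem, hft, hg⟩ := h
  have : f - g = f t • (Finsupp.single t (1 : k) - v) := by
    rw [hg]; rw [smul_sub, Finsupp.smul_single, smul_eq_mul, mul_one]; abel
  rw [this]
  exact Submodule.smul_mem _ _ (Submodule.subset_span ⟨(t, v), hmem, rfl⟩)

lemma rtg_sub_mem {f g : W →₀ k} (h : ReflTransGen (RewStep S) f g) :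
    f - g ∈ RewIdeal S := by
  induction h with
  | refl => simpa using (RewIdeal S).zero_mem
  | tail _ hstep ih =>
      rename_i b c _
      have := (RewIdeal S).add_mem ih (rewStep_sub_mem hstep)
      simpa using this

open scoped Classical in
/-- Termination: the flipped step relation is well-founded. -/
lemma rewStep_wf (hS : RewCompatible S) :
    WellFounded (fun g f : W →₀ k => RewStep S f g) := by
  have hwf : WellFounded (Finsupp.Lex ((· > ·) : W → W → Prop) ((· < ·) : ℕ → ℕ → Prop)) := by
    exact Finsupp.Lex.wellFounded' (fun n => Nat.not_lt_zero n) (Nat.lt_wfRel.wf)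
      (IsWellFounded.wf)
  have : Subrelation (fun g f : W →₀ k => RewStep S f g)
      (InvImage (Finsupp.Lex ((· > ·) : W → W → Prop) ((· < ·) : ℕ → ℕ → Prop))
        (fun f => f.mapRange (fun c => if c = 0 then 0 else 1) (by simp))) := by
    intro g f h
    obtain ⟨t, v, _, hft, _, hgt, habove⟩ := rewStep_spec hS h
    refine ⟨t, ?_, ?_⟩
    · intro d hd
      simp only [Finsupp.mapRange_apply, habove d hd]
    · simp [Finsupp.mapRange_apply, hft, hgt]
  exact Subrelation.wf this (InvImage.wf _ hwf)

/-- Every element rewrites to an irreducible element. -/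
lemma exists_nf (hS : RewCompatible S) (f : W →₀ k) :
    ∃ g, ReflTransGen (RewStep S) f g ∧ ∀ t ∈ g.support, ∀ v, (t, v) ∉ S := by
  induction f using (rewStep_wf hS).induction with
  | _ f ih =>
    by_cases hred : ∃ t ∈ f.support, ∃ v, (t, v) ∈ S
    · obtain ⟨t, hts, v, hv⟩ := hred
      have hft : f t ≠ 0 := Finsupp.mem_support_iff.mp hts
      have hstep : RewStep S f (f - Finsupp.single t (f t) + f t • v) := ⟨t, v, hv, hft, rfl⟩
      obtain ⟨g, hg1, hg2⟩ := ih _ hstep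
      exact ⟨g, ReflTransGen.head hstep hg1, hg2⟩
    · push_neg at hred
      exact ⟨f, ReflTransGen.refl, hred⟩

end Aux

section Aux2
variable {k W : Type*} [Field k] [LinearOrder W] [WellFoundedLT W]
variable {S : Set (W × (W →₀ k))}

lemma rtg_fixed (hS : RewCompatible S) {t : W} (ht : ∀ v, (t, v) ∉ S) {f g : W →₀ k}
    (h : ReflTransGen (RewStep S) f g) (htop : ∀ w, t < w → f w = 0) :
    g t = f t ∧ ∀ w, t < w → g w = 0 := by
  induction h with
  | refl => exact ⟨rfl, htop⟩
  | tail _ hstep ih =>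
      obtain ⟨t', v', hmem, hft', _, _, habove⟩ := rewStep_spec hS hstep
      have ht' : t' < t := by
        rcases lt_trichotomy t' t with h | h | h
        · exact h
        · exact absurd hmem (h ▸ ht v')
        · exact absurd (ih.2 t' h) hft'
      exact ⟨(habove t ht').trans ih.1, fun w hw => (habove w (ht'.trans hw)).trans (ih.2 w hw)⟩

lemma not_rtg_zero (hS : RewCompatible S) {f : W →₀ k} (hf : f ≠ 0)
    (ht : ∀ v, (f.support.max' (Finsupp.support_nonempty_iff.mpr hf), v) ∉ S) :
    ¬ ReflTransGen (RewStep S) f 0 := by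
  intro h
  set t := f.support.max' (Finsupp.support_nonempty_iff.mpr hf) with htdef
  have htop : ∀ w, t < w → f w = 0 := by
    intro w hw
    by_contra hne
    exact absurd (Finset.le_max' _ w (Finsupp.mem_support_iff.mpr hne)) (not_le.mpr hw)
  have := (rtg_fixed hS ht h htop).1
  exact Finsupp.mem_support_iff.mp (f.support.max'_mem _) this.symm

lemma zero_rtg {g : W →₀ k} (h : ReflTransGen (RewStep S) 0 g) : g = 0 := by
  rcases (ReflTransGen.cases_head h) with h | ⟨c, hc, _⟩
  · exact h.symm
  · obtain ⟨t, v, _, hft, _⟩ := hc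
    simp at hft

lemma rtg_eqvGen {f g : W →₀ k} (h : ReflTransGen (RewStep S) f g) :
    EqvGen (RewStep S) f g := by
  induction h with
  | refl => exact EqvGen.refl _
  | tail _ hstep ih => exact EqvGen.trans _ _ _ ih (EqvGen.rel _ _ hstep)

lemma eqvGen_add_smul_rule (hS : RewCompatible S) {t : W} {v : W →₀ k}
    (hrule : (t, v) ∈ S) (c : k) (f : W →₀ k) :
    EqvGen (RewStep S) (f + c • (Finsupp.single t 1 - v)) f := by
  have hvt : v t = 0 := by
    by_contra hne
    exact absurd (hS _ hrule t (Finsupp.mem_support_iff.mpr hne)) (lt_irrefl t)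
  set x := f + c • (Finsupp.single t 1 - v) with hxdef
  have hxt : x t = f t + c := by
    simp [hxdef, hvt]
  by_cases hc : c = 0
  · rw [hxdef, hc]; simpa using EqvGen.refl f
  by_cases hft : f t = 0
  · -- x steps to f
    refine EqvGen.rel _ _ ⟨t, v, hrule, ?_, ?_⟩
    · rw [hxt, hft, zero_add]; exact hc
    · rw [hxt, hft, zero_add, hxdef]
      ext w
      by_cases hw : w = t
      · subst hw; simp [Finsupp.single_apply, hvt]; try ring
      · simp [Finsupp.single_apply, Ne.symm hw, hvt]; try ring
  by_cases hftc : f t + c = 0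
  · -- f steps to x
    refine EqvGen.symm _ _ (EqvGen.rel _ _ ⟨t, v, hrule, hft, ?_⟩)
    have hcval : c = -f t := by linear_combination hftc
    rw [hxdef, hcval]
    ext w
    by_cases hw : w = t
    · subst hw; simp [Finsupp.single_apply, hvt]; try ring
    · simp [Finsupp.single_apply, Ne.symm hw, hvt]; try ring
  · -- both step to the common element
    have h1 : RewStep S f (f - Finsupp.single t (f t) + f t • v) := ⟨t, v, hrule, hft, rfl⟩
    have h2 : RewStep S x (f - Finsupp.single t (f t) + f t • v) := by
      refine ⟨t, v, hrule, by rw [hxt]; exact hftc, ?_⟩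
      rw [hxt, hxdef]
      ext w
      by_cases hw : w = t
      · subst hw; simp [Finsupp.single_apply, hvt]; try ring
      · simp [Finsupp.single_apply, Ne.symm hw, hvt]; try ring
    exact EqvGen.trans _ _ _ (EqvGen.rel _ _ h2) (EqvGen.symm _ _ (EqvGen.rel _ _ h1))

lemma eqvGen_of_mem_ideal (hS : RewCompatible S) {x : W →₀ k} (hx : x ∈ RewIdeal S) :
    ∀ (c : k) (f : W →₀ k), EqvGen (RewStep S) (f + c • x) f := by
  induction hx using Submodule.span_induction with
  | mem y hy =>
      obtain ⟨p, hp, rfl⟩ := hy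
      exact fun c f => eqvGen_add_smul_rule hS hp c f
  | zero => intro c f; simpa using EqvGen.refl f
  | add y z _ _ hy hz =>
      intro c f
      have h1 : EqvGen (RewStep S) ((f + c • y) + c • z) (f + c • y) := hz c (f + c • y)
      have h2 := hy c f
      have : f + c • (y + z) = (f + c • y) + c • z := by rw [smul_add]; abel
      rw [this]
      exact EqvGen.trans _ _ _ h1 h2
  | smul a y _ hy =>
      intro c f
      have := hy (c * a) f
      rwa [mul_smul] at this

lemma joinable_of_eqvGen (hconf : RewConfluent S) {f g : W →₀ k}
    (h : EqvGen (RewStep S) f g) :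
    Relation.Join (ReflTransGen (RewStep S)) f g := by
  have hequiv : Equivalence (Relation.Join (ReflTransGen (RewStep S))) :=
    Relation.equivalence_join (fun a b c hab hac => hconf a b c hab hac)
  induction h with
  | rel a b hab => exact ⟨b, ReflTransGen.single hab, ReflTransGen.refl⟩
  | refl a => exact hequiv.refl a
  | symm a b _ ih => exact hequiv.symm ih
  | trans a b c _ _ ih1 ih2 => exact hequiv.trans ih1 ih2

lemma leading_of_confluent (hS : RewCompatible S) (hconf : RewConfluent S) :
    ∀ f ∈ RewIdeal S, f ≠ 0 →
      ∃ t ∈ f.support, (∀ w ∈ f.support, w ≤ t) ∧ ∃ v, (t, v) ∈ S := by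
  intro f hf hfne
  have hE : EqvGen (RewStep S) f 0 := by
    simpa using eqvGen_of_mem_ideal hS hf 1 0
  obtain ⟨h, hfh, h0h⟩ := joinable_of_eqvGen hconf hE
  have hh0 : h = 0 := zero_rtg h0h
  subst hh0
  have hne : f.support.Nonempty := Finsupp.support_nonempty_iff.mpr hfne
  refine ⟨f.support.max' hne, f.support.max'_mem hne, fun w hw => Finset.le_max' _ w hw, ?_⟩
  by_contra hnov
  push_neg at hnov
  exact not_rtg_zero hS hfne (fun v => hnov v) hfh

lemma confluent_of_leading (hS : RewCompatible S)
    (hB : ∀ f ∈ RewIdeal S, f ≠ 0 →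
      ∃ t ∈ f.support, (∀ w ∈ f.support, w ≤ t) ∧ ∃ v, (t, v) ∈ S) :
    RewConfluent S := by
  intro f g₁ g₂ h1 h2
  obtain ⟨h₁, hg1, hirr1⟩ := exists_nf hS g₁
  obtain ⟨h₂, hg2, hirr2⟩ := exists_nf hS g₂
  have hmem : h₁ - h₂ ∈ RewIdeal S := by
    have m1 := rtg_sub_mem (h1.trans hg1)
    have m2 := rtg_sub_mem (h2.trans hg2)
    have : h₁ - h₂ = (f - h₂) - (f - h₁) := by abel
    rw [this]; exact (RewIdeal S).sub_mem m2 m1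
  have heq : h₁ = h₂ := by
    by_contra hne
    obtain ⟨t, hts, _, v, hv⟩ := hB _ hmem (sub_ne_zero.mpr hne)
    have := Finsupp.support_sub hts
    rcases Finset.mem_union.mp this with h | h
    · exact hirr1 t h v hv
    · exact hirr2 t h v hv
  exact ⟨h₁, hg1, heq ▸ hg2⟩

end Aux2

section Aux3
variable {k W : Type*} [Field k] [LinearOrder W] [WellFoundedLT W]
variable {S : Set (W × (W →₀ k))}

lemma mem_irrSpan_iff {f : W →₀ k} :
    f ∈ RewIrrSpan S ↔ ↑f.support ⊆ RewIrr S := by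
  rw [RewIrrSpan, ← Finsupp.supported_eq_span_single, Finsupp.mem_supported]

lemma nf_mem_irrSpan {g : W →₀ k} (hirr : ∀ t ∈ g.support, ∀ v, (t, v) ∉ S) :
    g ∈ RewIrrSpan S :=
  mem_irrSpan_iff.mpr (fun t ht => fun v => hirr t ht v)

lemma sup_eq_top (hS : RewCompatible S) : RewIrrSpan S ⊔ RewIdeal S = ⊤ := by
  rw [eq_top_iff]
  intro f _
  obtain ⟨g, hfg, hirr⟩ := exists_nf hS f
  exact Submodule.mem_sup.mpr ⟨g, nf_mem_irrSpan hirr, f - g, rtg_sub_mem hfg, by abel⟩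

lemma inf_eq_bot (hB : ∀ f ∈ RewIdeal S, f ≠ 0 →
      ∃ t ∈ f.support, (∀ w ∈ f.support, w ≤ t) ∧ ∃ v, (t, v) ∈ S) :
    RewIrrSpan S ⊓ RewIdeal S = ⊥ := by
  rw [Submodule.eq_bot_iff]
  rintro x ⟨hx1, hx2⟩
  by_contra hne
  obtain ⟨t, hts, _, v, hv⟩ := hB x hx2 hne
  exact mem_irrSpan_iff.mp hx1 hts v hv

lemma leading_of_ds (hS : RewCompatible S) (hinf : RewIrrSpan S ⊓ RewIdeal S = ⊥) :
    ∀ f ∈ RewIdeal S, f ≠ 0 →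
      ∃ t ∈ f.support, (∀ w ∈ f.support, w ≤ t) ∧ ∃ v, (t, v) ∈ S := by
  intro f hf hfne
  obtain ⟨g, hfg, hirr⟩ := exists_nf hS f
  have hgI : g ∈ RewIdeal S := by
    have := (RewIdeal S).sub_mem hf (rtg_sub_mem hfg)
    simpa using this
  have hg0 : g = 0 := by
    rw [Submodule.eq_bot_iff] at hinf
    exact hinf g ⟨nf_mem_irrSpan hirr, hgI⟩
  have hrtg0 : ReflTransGen (RewStep S) f 0 := hg0 ▸ hfg
  have hne : f.support.Nonempty := Finsupp.support_nonempty_iff.mpr hfne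
  refine ⟨f.support.max' hne, f.support.max'_mem hne, fun w hw => Finset.le_max' _ w hw, ?_⟩
  by_contra hnov
  push_neg at hnov
  exact not_rtg_zero hS hfne (fun v => hnov v) hrtg0

lemma exists_basis (hS : RewCompatible S) (hinf : RewIrrSpan S ⊓ RewIdeal S = ⊥) :
    ∃ b : Module.Basis (RewIrr S) k ((W →₀ k) ⧸ RewIdeal S),
      ∀ w : RewIrr S, b w = Submodule.Quotient.mk (Finsupp.single (w : W) (1 : k)) := by
  have hfam : True := trivial
  let fam : RewIrr S → (W →₀ k) := fun w => Finsupp.single (w : W) (1 : k)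
  have hrange : Set.range fam = (fun w => Finsupp.single w (1 : k)) '' RewIrr S :=
    (Set.image_eq_range (fun w => Finsupp.single w (1 : k)) (RewIrr S)).symm
  have hli : LinearIndependent k fam := by
    have : fam = ⇑(Finsupp.basisSingleOne : Module.Basis W k (W →₀ k)) ∘ Subtype.val := by
      funext w; simp [hfam, fam]
    rw [this]
    exact Finsupp.basisSingleOne.linearIndependent.comp Subtype.val Subtype.val_injective
  have hdisj : Disjoint (Submodule.span k (Set.range fam))
      (LinearMap.ker (RewIdeal S).mkQ) := by
    rw [Submodule.ker_mkQ, hrange]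
    exact disjoint_iff.mpr hinf
  have hli2 : LinearIndependent k (fun w => (RewIdeal S).mkQ (fam w)) := hli.map hdisj
  have hspan : ⊤ ≤ Submodule.span k (Set.range (fun w => (RewIdeal S).mkQ (fam w))) := by
    intro x _
    obtain ⟨f, rfl⟩ := (RewIdeal S).mkQ_surjective x
    obtain ⟨g, hfg, hirr⟩ := exists_nf hS f
    have heq : (RewIdeal S).mkQ f = (RewIdeal S).mkQ g := by
      rw [Submodule.mkQ_apply, Submodule.mkQ_apply]
      exact (Submodule.Quotient.eq _).mpr (rtg_sub_mem hfg)
    rw [heq]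
    have hgmem : g ∈ Submodule.span k ((fun w => Finsupp.single w (1 : k)) '' RewIrr S) :=
      nf_mem_irrSpan hirr
    have : (RewIdeal S).mkQ g ∈ Submodule.map (RewIdeal S).mkQ
        (Submodule.span k ((fun w => Finsupp.single w (1 : k)) '' RewIrr S)) :=
      Submodule.mem_map_of_mem hgmem
    rw [Submodule.map_span, ← hrange, ← Set.range_comp] at this
    exact this
  refine ⟨Module.Basis.mk hli2 hspan, fun w => ?_⟩
  rw [Module.Basis.mk_apply]
  rfl

end Aux3

/-- Composition--Diamond-style equivalence: for a `≤`-compatible rewriting system over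
a well-ordered set, the following are equivalent: (1) the system is confluent;
(2) the leading (maximum) monomial of every nonzero element of `I_S` is the
left-hand side of some rule; (3) `V = k·Irr(S) ⊕ I_S` and the residue classes of the
irreducible monomials form a `k`-basis of `V / I_S`. -/
theorem confluent_iff_leading_iff_basis {k W : Type*} [Field k] [LinearOrder W]
    [WellFoundedLT W] (S : Set (W × (W →₀ k))) (hS : RewCompatible S) :
    (RewConfluent S ↔
      ∀ f ∈ RewIdeal S, f ≠ 0 →
        ∃ t ∈ f.support, (∀ w ∈ f.support, w ≤ t) ∧ ∃ v, (t, v) ∈ S) ∧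
    (RewConfluent S ↔
      ((RewIrrSpan S ⊔ RewIdeal S = ⊤ ∧ RewIrrSpan S ⊓ RewIdeal S = ⊥) ∧
        ∃ b : Module.Basis (RewIrr S) k ((W →₀ k) ⧸ RewIdeal S),
          ∀ w : RewIrr S,
            b w = Submodule.Quotient.mk (Finsupp.single (w : W) (1 : k)))) := by
  refine ⟨⟨leading_of_confluent hS, confluent_of_leading hS⟩, ?_, ?_⟩
  · intro hconf
    have hB := leading_of_confluent hS hconf
    have hinf := inf_eq_bot hB
    exact ⟨⟨sup_eq_top hS, hinf⟩, exists_basis hS hinf⟩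
  · rintro ⟨⟨_, hinf⟩, -⟩
    exact confluent_of_leading hS (leading_of_ds hS hinf)
end

section
/- Let ≤ be a well-order on W and let Π be a ≤-compatible term-rewriting system on V = W →₀ k. Then every nonzero f ∈ V admits a representation f = Σᵢ αᵢ·δ_{wᵢ} + Σⱼ βⱼ·(δ_{tⱼ} − vⱼ) (finite sums), where αᵢ, βⱼ ∈ k, each wᵢ ∈ Irr(Π) satisfies wᵢ ≤ w̄, each (tⱼ, vⱼ) ∈ Π satisfies tⱼ ≤ w̄, and w̄ denotes the ≤-maximum element of supp(f). -/
section Aux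

variable {k W : Type*} [Field k] [LinearOrder W]

/-- Auxiliary predicate: `g` has a representation bounded by `c`. -/
def RepB (S : Set (W × (W →₀ k))) (c : W) (g : W →₀ k) : Prop :=
  ∃ (n m : ℕ) (α : Fin n → k) (w : Fin n → W) (β : Fin m → k) (t : Fin m → W)
    (v : Fin m → (W →₀ k)),
    (∀ i, w i ∈ RewIrr S ∧ w i ≤ c) ∧
    (∀ j, (t j, v j) ∈ S ∧ t j ≤ c) ∧
    g = (∑ i, α i • Finsupp.single (w i) (1 : k)) +
          ∑ j, β j • (Finsupp.single (t j) (1 : k) - v j)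

lemma RepB.zero (S : Set (W × (W →₀ k))) (c : W) : RepB S c 0 := by
  exact ⟨0, 0, ![], ![], ![], ![], ![], fun i => i.elim0, fun j => j.elim0, by simp⟩

lemma RepB.mono {S : Set (W × (W →₀ k))} {c c' : W} {g : W →₀ k}
    (h : RepB S c g) (hcc : c ≤ c') : RepB S c' g := by
  obtain ⟨n, m, α, w, β, t, v, h1, h2, h3⟩ := h
  exact ⟨n, m, α, w, β, t, v, fun i => ⟨(h1 i).1, (h1 i).2.trans hcc⟩,
    fun j => ⟨(h2 j).1, (h2 j).2.trans hcc⟩, h3⟩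

lemma RepB.add {S : Set (W × (W →₀ k))} {c : W} {g g' : W →₀ k}
    (h : RepB S c g) (h' : RepB S c g') : RepB S c (g + g') := by
  obtain ⟨n, m, α, w, β, t, v, h1, h2, h3⟩ := h
  obtain ⟨n', m', α', w', β', t', v', h1', h2', h3'⟩ := h'
  refine ⟨n + n', m + m', Fin.addCases α α', Fin.addCases w w', Fin.addCases β β',
    Fin.addCases t t', Fin.addCases v v', ?_, ?_, ?_⟩
  · intro i
    refine Fin.addCases (fun i => ?_) (fun i => ?_) i <;> simp [h1, h1']
  · intro j
    refine Fin.addCases (fun j => ?_) (fun j => ?_) j <;> simp [h2, h2']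
  · rw [h3, h3', Fin.sum_univ_add, Fin.sum_univ_add]
    simp only [Fin.addCases_left, Fin.addCases_right]
    abel

lemma RepB.smul {S : Set (W × (W →₀ k))} {c : W} {g : W →₀ k}
    (h : RepB S c g) (a : k) : RepB S c (a • g) := by
  obtain ⟨n, m, α, w, β, t, v, h1, h2, h3⟩ := h
  refine ⟨n, m, fun i => a * α i, w, fun j => a * β j, t, v, h1, h2, ?_⟩
  rw [h3, smul_add, Finset.smul_sum, Finset.smul_sum]
  simp [smul_smul]

lemma RepB.sum {S : Set (W × (W →₀ k))} {c : W} {ι : Type*} (s : Finset ι)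
    (g : ι → W →₀ k) (h : ∀ i ∈ s, RepB S c (g i)) : RepB S c (∑ i ∈ s, g i) := by
  classical
  induction s using Finset.induction with
  | empty => simpa using RepB.zero S c
  | insert _ _ hx ih =>
    rw [Finset.sum_insert hx]
    exact (h _ (Finset.mem_insert_self _ _)).add
      (ih fun i hi => h i (Finset.mem_insert_of_mem hi))

lemma RepB.single [WellFoundedLT W] {S : Set (W × (W →₀ k))} (hS : RewCompatible S)
    (u : W) : RepB S u (Finsupp.single u (1 : k)) := by
  induction u using WellFoundedLT.induction with
  | ind u IH =>
    by_cases hu : u ∈ RewIrr S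
    · refine ⟨1, 0, ![1], ![u], ![], ![], ![], ?_, fun j => j.elim0, by simp⟩
      intro i
      fin_cases i <;> exact ⟨hu, le_refl u⟩
    · simp only [RewIrr, Set.mem_setOf_eq, not_forall, not_not] at hu
      obtain ⟨v, hv⟩ := hu
      have hvrep : RepB S u v := by
        have : v = ∑ x ∈ v.support, v x • Finsupp.single x (1 : k) := by
          conv_lhs => rw [← Finsupp.sum_single v]
          rw [Finsupp.sum]
          congr 1
          ext x
          rw [Finsupp.smul_single, smul_eq_mul, mul_one]
        rw [this]
        refine RepB.sum _ _ fun x hx => ?_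
        have hxu : x < u := hS (u, v) hv x hx
        exact ((IH x hxu).smul (v x)).mono hxu.le
      have hrule : RepB S u (Finsupp.single u (1 : k) - v) :=
        ⟨0, 1, ![], ![], ![1], ![u], ![v], fun i => i.elim0,
          fun j => by fin_cases j <;> exact ⟨hv, le_refl u⟩, by simp⟩
      have := hrule.add hvrep
      simpa using this

end Aux

/-- For a `≤`-compatible rewriting system over a well-ordered set, every nonzero `f`
admits a representation `f = Σᵢ αᵢ·δ_{wᵢ} + Σⱼ βⱼ·(δ_{tⱼ} − vⱼ)`, where each
`wᵢ ∈ Irr(S)` satisfies `wᵢ ≤ w̄`, each `(tⱼ, vⱼ) ∈ S` satisfies `tⱼ ≤ w̄`, and `w̄`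
is the maximum element of the support of `f`. -/
theorem exists_representation {k W : Type*} [Field k] [LinearOrder W] [WellFoundedLT W]
    (S : Set (W × (W →₀ k))) (hS : RewCompatible S) (f : W →₀ k) (hf : f ≠ 0)
    (wbar : W) (hbar : wbar ∈ f.support ∧ ∀ w ∈ f.support, w ≤ wbar) :
    ∃ (n m : ℕ) (α : Fin n → k) (w : Fin n → W) (β : Fin m → k) (t : Fin m → W)
      (v : Fin m → (W →₀ k)),
      (∀ i, w i ∈ RewIrr S ∧ w i ≤ wbar) ∧
      (∀ j, (t j, v j) ∈ S ∧ t j ≤ wbar) ∧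
      f = (∑ i, α i • Finsupp.single (w i) (1 : k)) +
            ∑ j, β j • (Finsupp.single (t j) (1 : k) - v j) := by
  have : RepB S wbar f := by
    have hfs : f = ∑ x ∈ f.support, f x • Finsupp.single x (1 : k) := by
      conv_lhs => rw [← Finsupp.sum_single f]
      rw [Finsupp.sum]
      congr 1
      ext x
      rw [Finsupp.smul_single, smul_eq_mul, mul_one]
    rw [hfs]
    refine RepB.sum _ _ fun x hx => ?_
    exact ((RepB.single hS x).smul (f x)).mono (hbar.2 x hx)
  exact this
end

section
/- Let ≤ be a well-order on W and let Π be a ≤-compatible term-rewriting system on V = W →₀ k. If Π is confluent, then every f ∈ V has a unique normal form: there exists a unique g ∈ k·Irr(Π) with f →*_Π g. -/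
set_option linter.unusedSectionVars false

section Aux

variable {k W : Type*} [Field k] [LinearOrder W] [WellFoundedLT W]
  {S : Set (W × (W →₀ k))}

/-- The auxiliary well-founded order that decreases along rewriting steps. -/
private def RewOrd (g f : W →₀ k) : Prop :=
  Finsupp.Lex (· > ·) (fun a b : k => a = 0 ∧ b ≠ 0) g f

private theorem rewOrd_wf : WellFounded (RewOrd (k := k) (W := W)) := by
  apply Finsupp.Lex.wellFounded'
  · intro n h; exact h.2 rfl
  · exact ⟨fun b => Acc.intro b fun a ha => Acc.intro a fun c hc => absurd ha.1 hc.2⟩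
  · exact (wellFounded_lt : WellFounded ((· < ·) : W → W → Prop))

private theorem rewStep_ord (hS : RewCompatible S) {f g : W →₀ k}
    (h : RewStep S f g) : RewOrd g f := by
  obtain ⟨t, v, hmem, hft, rfl⟩ := h
  have hv : ∀ j, t ≤ j → v j = 0 := by
    intro j hj
    by_contra hvj
    exact absurd (hS (t, v) hmem j (Finsupp.mem_support_iff.mpr hvj)) (not_lt.mpr hj)
  refine ⟨t, fun j hj => ?_, ?_, hft⟩
  · simp [Finsupp.single_apply, (ne_of_gt hj).symm, hv j (le_of_lt hj)]
  · simp [Finsupp.single_apply, hv t le_rfl]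

private theorem rew_exists (hS : RewCompatible S) (f : W →₀ k) :
    ∃ g : W →₀ k, ↑g.support ⊆ RewIrr S ∧ Relation.ReflTransGen (RewStep S) f g := by
  refine rewOrd_wf.induction
    (C := fun f => ∃ g : W →₀ k, ↑g.support ⊆ RewIrr S ∧ Relation.ReflTransGen (RewStep S) f g) f ?_
  intro f IH
  by_cases hirr : ↑f.support ⊆ RewIrr S
  · exact ⟨f, hirr, .refl⟩
  · have : ∃ t ∈ f.support, ∃ v, (t, v) ∈ S := by
      simp only [Set.subset_def, RewIrr, Set.mem_setOf_eq, not_forall] at hirr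
      obtain ⟨t, ht, v, hv⟩ := hirr
      exact ⟨t, ht, v, not_not.mp hv⟩
    obtain ⟨t, ht, v, hv⟩ := this
    have hstep : RewStep S f (f - Finsupp.single t (f t) + f t • v) :=
      ⟨t, v, hv, Finsupp.mem_support_iff.mp ht, rfl⟩
    obtain ⟨g, hg, hgs⟩ := IH _ (rewStep_ord hS hstep)
    exact ⟨g, hg, .head hstep hgs⟩

private theorem rew_no_step {g : W →₀ k} (hg : ↑g.support ⊆ RewIrr S) {h : W →₀ k}
    (hh : Relation.ReflTransGen (RewStep S) g h) : h = g := by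
  rcases hh.cases_head with rfl | ⟨c, hc, _⟩
  · rfl
  · obtain ⟨t, v, hmem, hgt, _⟩ := hc
    exact absurd hmem (hg (Finsupp.mem_support_iff.mpr hgt) v)

private theorem rew_mem_irrSpan {g : W →₀ k} :
    g ∈ RewIrrSpan S ↔ ↑g.support ⊆ RewIrr S := by
  rw [RewIrrSpan, ← Finsupp.supported_eq_span_single, Finsupp.mem_supported]

end Aux

/-- For a confluent `≤`-compatible rewriting system over a well-ordered set, every
element has a unique normal form: a unique `g ∈ k·Irr(S)` with `f →* g`. -/
theorem unique_normal_form {k W : Type*} [Field k] [LinearOrder W] [WellFoundedLT W]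
    (S : Set (W × (W →₀ k))) (hS : RewCompatible S) (hc : RewConfluent S) (f : W →₀ k) :
    ∃! g : W →₀ k, g ∈ RewIrrSpan S ∧ Relation.ReflTransGen (RewStep S) f g := by
  obtain ⟨g, hg, hgs⟩ := rew_exists hS f
  refine ⟨g, ⟨rew_mem_irrSpan.mpr hg, hgs⟩, ?_⟩
  rintro g' ⟨hg', hgs'⟩
  obtain ⟨h, h1, h2⟩ := hc f g' g hgs' hgs
  calc g' = h := (rew_no_step (rew_mem_irrSpan.mp hg') h1).symm
    _ = g := rew_no_step hg h2
end
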